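/- Let 0 < ν < μ, m ∈ (0,1], r ≥ 1, and let W : [ν, μ] → ℝ be a continuous, nonnegative probability density symmetric about (ν+μ)/2, with the point (ν+μ)/(2m) ∈ [ν, μ]. Suppose the function x ↦ r·x^{r-1} is (h,m)-convex on [ν, μ] with h(γ) = γ. Then the r-th moment E_r(X) = ∫_ν^μ t^r W(t) dt satisfies |(ν^r + μ^r)/2 · ∫_ν^μ W(x) dx − E_r(X)| ≤ ((μ-ν)²/4) · r · ‖W‖_∞ · [ (1/3)(ν^{r-1} + μ^{r-1}) + (1/3)·m·((ν+μ)/(2m))^{r-1} ]. -/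

import Mathlib

open Set intervalIntegral

set_option maxHeartbeats 1000000 in
theorem moment_bound
    (ν μ m r : ℝ) (hν : 0 < ν) (hνμ : ν < μ) (hm : m ∈ Set.Ioc (0:ℝ) 1) (hr : 1 ≤ r)
    (W : ℝ → ℝ)
    (hWnonneg : ∀ x ∈ Set.Icc ν μ, 0 ≤ W x)
    (hWcont : ContinuousOn W (Set.Icc ν μ))
    (hWsym : ∀ x ∈ Set.Icc ν μ, W (ν + μ - x) = W x)
    (hWdensity : (∫ t in ν..μ, W t) = 1)
    (hmid : (ν + μ) / (2 * m) ∈ Set.Icc ν μ)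
    (hconv : ∀ x ∈ Set.Icc ν μ, ∀ y ∈ Set.Icc ν μ, ∀ γ ∈ Set.Icc (0:ℝ) 1,
      r * (γ * x + m * (1 - γ) * y) ^ (r - 1)
        ≤ γ * (r * x ^ (r - 1)) + m * (1 - γ) * (r * y ^ (r - 1))) :
    |(ν ^ r + μ ^ r) / 2 * (∫ x in ν..μ, W x) - ∫ t in ν..μ, t ^ r * W t|
      ≤ (μ - ν) ^ 2 / 4 * r * sSup (W '' Set.Icc ν μ) *
        ((1/3) * (ν ^ (r - 1) + μ ^ (r - 1))
          + (1/3) * m * (((ν + μ) / (2 * m)) ^ (r - 1)) ) := by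
  obtain ⟨hm0, hm1⟩ := hm
  have hμ : 0 < μ := hν.trans hνμ
  have hle : ν ≤ μ := hνμ.le
  have hr1 : (0:ℝ) ≤ r - 1 := by linarith
  have hr0 : (0:ℝ) < r := by linarith
  set mid : ℝ := (ν + μ) / 2 with hmid_def
  set hh : ℝ := (μ - ν) / 2 with hh_def
  set c : ℝ := (ν + μ) / (2 * m) with hc_def
  have hhpos : 0 < hh := by rw [hh_def]; linarith
  have hne : μ - ν ≠ 0 := sub_ne_zero.mpr hνμ.ne'
  have hne' : -ν + μ ≠ 0 := by intro h; apply hne; linarith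
  have hmidpos : 0 < mid := by rw [hmid_def]; linarith
  have hmidle : ν ≤ mid := by rw [hmid_def]; linarith
  have hmidle' : mid ≤ μ := by rw [hmid_def]; linarith
  have hmc : m * c = mid := by
    rw [hc_def, hmid_def]; field_simp
  set gμ : ℝ := r * μ ^ (r - 1) with hgμ_def
  set gc : ℝ := r * c ^ (r - 1) with hgc_def
  have hcpos : 0 < c := lt_of_lt_of_le hν hmid.1
  have hgμ0 : 0 ≤ gμ := by positivity
  have hgc0 : 0 ≤ gc := by positivity
  -- continuity facts
  have hcrpow : Continuous (fun t : ℝ => t ^ r) := Real.continuous_rpow_const (by linarith)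
  have hcrpow' : Continuous (fun t : ℝ => t ^ (r - 1)) := Real.continuous_rpow_const hr1
  set F : ℝ → ℝ := fun t => (ν ^ r + μ ^ r) / 2 - (t ^ r + (ν + μ - t) ^ r) / 2 with hF_def
  have hFcont : Continuous F := by
    apply Continuous.sub continuous_const
    exact (hcrpow.add (hcrpow.comp (by continuity))).div_const 2
  have hWint : IntervalIntegrable W MeasureTheory.volume ν μ := by
    apply ContinuousOn.intervalIntegrable; rwa [uIcc_of_le hle]
  have hrWint : IntervalIntegrable (fun t => t ^ r * W t) MeasureTheory.volume ν μ := by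
    apply ContinuousOn.intervalIntegrable
    rw [uIcc_of_le hle]; exact (hcrpow.continuousOn).mul hWcont
  have hrWint' : IntervalIntegrable (fun t => (ν + μ - t) ^ r * W t) MeasureTheory.volume ν μ := by
    apply ContinuousOn.intervalIntegrable
    rw [uIcc_of_le hle]
    exact ((hcrpow.comp (by continuity)).continuousOn).mul hWcont
  have hFWint : IntervalIntegrable (fun t => F t * W t) MeasureTheory.volume ν μ := by
    apply ContinuousOn.intervalIntegrable
    rw [uIcc_of_le hle]; exact hFcont.continuousOn.mul hWcont
  -- symmetrization
  have hsub : (∫ t in ν..μ, t ^ r * W t) = ∫ t in ν..μ, (ν + μ - t) ^ r * W t := by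
    have h1 := intervalIntegral.integral_comp_sub_left (a := ν) (b := μ)
      (fun x => x ^ r * W x) (ν + μ)
    have h2 : ν + μ - μ = ν := by ring
    have h3 : ν + μ - ν = μ := by ring
    rw [h2, h3] at h1
    rw [← h1]
    apply intervalIntegral.integral_congr
    intro x hx
    rw [uIcc_of_le hle] at hx
    simp only
    rw [hWsym x hx]
  have hD : (ν ^ r + μ ^ r) / 2 * (∫ x in ν..μ, W x) - (∫ t in ν..μ, t ^ r * W t)
      = ∫ t in ν..μ, F t * W t := by
    have heq : ∀ t : ℝ, F t * W t
        = (ν ^ r + μ ^ r) / 2 * W t - ((t ^ r * W t) / 2 + ((ν + μ - t) ^ r * W t) / 2) := by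
      intro t; rw [hF_def]; ring
    rw [show (fun t => F t * W t) = fun t =>
        (ν ^ r + μ ^ r) / 2 * W t - ((t ^ r * W t) / 2 + ((ν + μ - t) ^ r * W t) / 2)
      from funext heq]
    rw [intervalIntegral.integral_sub (hWint.const_mul _) ((hrWint.div_const 2).add (hrWint'.div_const 2)),
      intervalIntegral.integral_add (hrWint.div_const 2) (hrWint'.div_const 2),
      intervalIntegral.integral_const_mul, intervalIntegral.integral_div,
      intervalIntegral.integral_div, ← hsub]
    ring
  -- F nonneg on Icc
  have hFnonneg : ∀ t ∈ Icc ν μ, 0 ≤ F t := by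
    intro t ht
    have hcvx := convexOn_rpow hr
    set γ : ℝ := (μ - t) / (μ - ν) with hγ_def
    have hγ0 : 0 ≤ γ := by
      apply div_nonneg <;> linarith [ht.2]
    have hγ1 : γ ≤ 1 := by
      rw [hγ_def, div_le_one (by linarith)]; linarith [ht.1]
    have h1 : (γ * ν + (1 - γ) * μ) ^ r ≤ γ * ν ^ r + (1 - γ) * μ ^ r := by
      have := hcvx.2 (mem_Ici.mpr hν.le) (mem_Ici.mpr hμ.le) hγ0
        (show (0:ℝ) ≤ 1 - γ by linarith) (show γ + (1 - γ) = 1 by ring)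
      simpa [smul_eq_mul] using this
    have h2 : ((1 - γ) * ν + γ * μ) ^ r ≤ (1 - γ) * ν ^ r + γ * μ ^ r := by
      have := hcvx.2 (mem_Ici.mpr hν.le) (mem_Ici.mpr hμ.le)
        (show (0:ℝ) ≤ 1 - γ by linarith) hγ0 (show (1 - γ) + γ = 1 by ring)
      simpa [smul_eq_mul] using this
    have ht1 : γ * ν + (1 - γ) * μ = t := by
      rw [hγ_def]; field_simp; ring
    have ht2 : (1 - γ) * ν + γ * μ = ν + μ - t := by
      rw [hγ_def]; field_simp; ring
    rw [ht1] at h1; rw [ht2] at h2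
    rw [hF_def]; simp only; linarith
  -- sup facts
  set M : ℝ := sSup (W '' Icc ν μ) with hM_def
  have hbdd : BddAbove (W '' Icc ν μ) := (isCompact_Icc.image_of_continuousOn hWcont).bddAbove
  have hWleM : ∀ x ∈ Icc ν μ, W x ≤ M := fun x hx => le_csSup hbdd (mem_image_of_mem W hx)
  have hM0 : 0 ≤ M := le_trans (hWnonneg ν (by constructor <;> linarith)) (hWleM ν (by constructor <;> linarith))
  -- |D| ≤ M * ∫ F
  have hFint : IntervalIntegrable F MeasureTheory.volume ν μ := hFcont.intervalIntegrable _ _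
  have habs : |∫ t in ν..μ, F t * W t| ≤ M * ∫ t in ν..μ, F t := by
    have hnn : 0 ≤ ∫ t in ν..μ, F t * W t := by
      apply intervalIntegral.integral_nonneg hle
      intro u hu; exact mul_nonneg (hFnonneg u hu) (hWnonneg u hu)
    rw [abs_of_nonneg hnn, ← intervalIntegral.integral_const_mul]
    apply intervalIntegral.integral_mono_on hle hFWint (hFint.const_mul M)
    intro x hx
    calc F x * W x ≤ F x * M := mul_le_mul_of_nonneg_left (hWleM x hx) (hFnonneg x hx)
      _ = M * F x := mul_comm _ _
  have hhne : hh ≠ 0 := hhpos.ne'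
  -- pointwise chord bound on the derivative g(u) = r u^(r-1) on [mid, μ]
  have hlam : ∀ u ∈ Icc mid μ,
      r * u ^ (r - 1) ≤ (u - mid) / hh * gμ + m * ((μ - u) / hh) * gc := by
    intro u hu
    have hγ0 : 0 ≤ (u - mid) / hh := div_nonneg (by linarith [hu.1]) hhpos.le
    have hγ1 : (u - mid) / hh ≤ 1 := by
      rw [div_le_one hhpos, hh_def, hmid_def]
      have := hu.2; linarith
    have key := hconv μ ⟨hle, le_refl μ⟩ c hmid ((u - mid) / hh) ⟨hγ0, hγ1⟩
    have hcomb : (u - mid) / hh * μ + m * (1 - (u - mid) / hh) * c = u := by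
      have h1 : m * (1 - (u - mid) / hh) * c = (1 - (u - mid) / hh) * mid := by
        rw [← hmc]; ring
      rw [h1, hmid_def, hh_def]
      field_simp [hne, hne']
      ring
    rw [hcomb] at key
    have h2 : 1 - (u - mid) / hh = (μ - u) / hh := by
      rw [hh_def, hmid_def]; field_simp [hne, hne']; ring
    rw [h2] at key
    rw [hgμ_def, hgc_def]
    linarith [key]
  -- FTC for rpow
  have hFTC : ∀ t : ℝ, (∫ u in t..μ, r * u ^ (r - 1)) = μ ^ r - t ^ r := by
    intro t
    rw [intervalIntegral.integral_const_mul,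
      integral_rpow (Or.inl (by linarith : (-1:ℝ) < r - 1)),
      show r - 1 + 1 = r by ring]
    field_simp
  set K1 : ℝ := gμ / hh - m * gc / hh with hK1_def
  set K2 : ℝ := m * μ * gc / hh - mid * gμ / hh with hK2_def
  set Q : ℝ → ℝ := fun t => K1 * (μ ^ 2 - t ^ 2) / 2 + K2 * (μ - t) with hQ_def
  clear_value Q K1 K2
  have hQcont : Continuous Q := by
    rw [hQ_def]; continuity
  have hQbound : ∀ t ∈ Icc mid μ, μ ^ r - t ^ r ≤ Q t := by
    intro t ht
    rw [← hFTC t]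
    have hlamint : (∫ u in t..μ, (u * K1 + K2)) = Q t := by
      rw [intervalIntegral.integral_add (intervalIntegrable_id.mul_const K1)
          intervalIntegrable_const,
        intervalIntegral.integral_mul_const, integral_id,
        intervalIntegral.integral_const, smul_eq_mul, hQ_def]
      ring
    have hmono : (∫ u in t..μ, r * u ^ (r - 1)) ≤ ∫ u in t..μ, (u * K1 + K2) := by
      apply intervalIntegral.integral_mono_on ht.2
        ((continuous_const.mul hcrpow').intervalIntegrable _ _)
        ((intervalIntegrable_id.mul_const K1).add intervalIntegrable_const)
      intro u hu
      have := hlam u ⟨le_trans ht.1 hu.1, hu.2⟩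
      have heq : (u - mid) / hh * gμ + m * ((μ - u) / hh) * gc = u * K1 + K2 := by
        rw [hK1_def, hK2_def]; field_simp; ring
      show r * u ^ (r - 1) ≤ u * K1 + K2
      linarith [this]
    linarith [hmono, hlamint.le, hlamint.ge]
  have hFleQ : ∀ t ∈ Icc mid μ, F t ≤ Q t / 2 := by
    intro t ht
    have h1 : ν ^ r ≤ (ν + μ - t) ^ r := by
      apply Real.rpow_le_rpow hν.le _ (by linarith : (0:ℝ) ≤ r)
      have := ht.2; linarith
    have h2 := hQbound t ht
    simp only [hF_def]
    linarith
  -- symmetry of F and splitting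
  have hFsymm : ∀ x : ℝ, F (ν + μ - x) = F x := by
    intro x
    rw [hF_def]; simp only
    rw [show ν + μ - (ν + μ - x) = x by ring]; ring
  have hhalf : (∫ t in ν..mid, F t) = ∫ t in mid..μ, F t := by
    have h1 := intervalIntegral.integral_comp_sub_left (a := ν) (b := mid) F (ν + μ)
    rw [show ν + μ - mid = mid by rw [hmid_def]; ring, show ν + μ - ν = μ by ring] at h1
    rw [← h1]
    apply intervalIntegral.integral_congr
    intro x _
    exact (hFsymm x).symm
  have hsplit : (∫ t in ν..μ, F t) = (∫ t in ν..mid, F t) + ∫ t in mid..μ, F t :=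
    (intervalIntegral.integral_add_adjacent_intervals
      (hFcont.intervalIntegrable _ _) (hFcont.intervalIntegrable _ _)).symm
  have hmono2 : (∫ t in mid..μ, F t) ≤ ∫ t in mid..μ, Q t / 2 := by
    apply intervalIntegral.integral_mono_on hmidle' (hFcont.intervalIntegrable _ _)
      ((hQcont.div_const 2).intervalIntegrable _ _) hFleQ
  have hQint : (∫ t in mid..μ, Q t) = hh ^ 2 * (gμ / 3 + m * gc / 6) := by
    have hrw : Q = fun t : ℝ => (K1 * μ ^ 2 / 2 + K2 * μ) - (K1 / 2 * t ^ 2 + K2 * t) := by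
      funext t; rw [hQ_def]; ring
    simp only [hrw]
    rw [intervalIntegral.integral_sub intervalIntegrable_const
        ((by fun_prop : Continuous fun t : ℝ => K1 / 2 * t ^ 2 + K2 * t).intervalIntegrable _ _),
      intervalIntegral.integral_add
        ((by fun_prop : Continuous fun t : ℝ => K1 / 2 * t ^ 2).intervalIntegrable _ _)
        ((by fun_prop : Continuous fun t : ℝ => K2 * t).intervalIntegrable _ _),
      intervalIntegral.integral_const_mul, intervalIntegral.integral_const_mul,
      integral_pow, integral_id, intervalIntegral.integral_const, smul_eq_mul]
    rw [hK1_def, hK2_def, hmid_def, hh_def]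
    push_cast
    field_simp
    ring
  have hFle : (∫ t in ν..μ, F t) ≤ hh ^ 2 * (gμ / 3 + m * gc / 6) := by
    have hq2 : (∫ t in mid..μ, Q t / 2) = (∫ t in mid..μ, Q t) / 2 :=
      intervalIntegral.integral_div 2 Q
    rw [hsplit, hhalf]
    rw [hq2, hQint] at hmono2
    linarith
  -- final assembly
  rw [hD]
  calc |∫ t in ν..μ, F t * W t| ≤ M * ∫ t in ν..μ, F t := habs
    _ ≤ M * (hh ^ 2 * (gμ / 3 + m * gc / 6)) := by
        exact mul_le_mul_of_nonneg_left hFle hM0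
    _ ≤ (μ - ν) ^ 2 / 4 * r * M *
        ((1/3) * (ν ^ (r - 1) + μ ^ (r - 1)) + (1/3) * m * c ^ (r - 1)) := by
        have e1 : 0 ≤ hh ^ 2 * r * M * ν ^ (r - 1) :=
          mul_nonneg (mul_nonneg (mul_nonneg (sq_nonneg hh) hr0.le) hM0)
            (Real.rpow_nonneg hν.le _)
        have e2 : 0 ≤ hh ^ 2 * r * M * (m * c ^ (r - 1)) :=
          mul_nonneg (mul_nonneg (mul_nonneg (sq_nonneg hh) hr0.le) hM0)
            (mul_nonneg hm0.le (Real.rpow_nonneg hcpos.le _))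
        have key : (μ - ν) ^ 2 / 4 * r * M *
            ((1/3) * (ν ^ (r - 1) + μ ^ (r - 1)) + (1/3) * m * c ^ (r - 1))
            - M * (hh ^ 2 * (gμ / 3 + m * gc / 6))
            = hh ^ 2 * r * M * ν ^ (r - 1) / 3 + hh ^ 2 * r * M * (m * c ^ (r - 1)) / 6 := by
          rw [hgμ_def, hgc_def, hh_def]; ring
        linarith [e1, e2, key.le, key.ge]
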